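/- Let R be a reduced indecomposable commutative unital ring and c ∈ R a nonzero nonunit. Then all nonnegative powers of c are pairwise distinct; in particular R is infinite. -/

import Mathlib

theorem stmt_12 {R : Type*} [CommRing R] [IsReduced R]
    (hind : ∀ e : R, IsIdempotentElem e → e = 0 ∨ e = 1)
    (c : R) (hc0 : c ≠ 0) (hcu : ¬IsUnit c) :
    (∀ m n : ℕ, c ^ m = c ^ n → m = n) ∧ Infinite R := by
  have key : ∀ m n : ℕ, m < n → c ^ m ≠ c ^ n := by
    intro m n hmn h
    obtain ⟨k, hk1, hkn⟩ : ∃ k, 1 ≤ k ∧ n = m + k := ⟨n - m, by omega, by omega⟩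
    have hmk : c ^ m * c ^ k = c ^ m := by rw [← pow_add, ← hkn, h]
    have haux : ∀ j : ℕ, c ^ m * (c ^ k) ^ j = c ^ m := by
      intro j
      induction j with
      | zero => simp
      | succ i ih => rw [pow_succ, ← mul_assoc, ih, hmk]
    have hle : m ≤ k * (m + 1) :=
      le_trans (Nat.le_succ m) (Nat.le_mul_of_pos_left (m + 1) hk1)
    have hpos : 0 < k * (m + 1) := by positivity
    set e := c ^ (k * (m + 1)) with he
    have hek : e = (c ^ k) ^ (m + 1) := by rw [he, ← pow_mul]
    have hsplit : e = c ^ (k * (m + 1) - m) * c ^ m := by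
      rw [he, ← pow_add]; congr 1; omega
    have hme : c ^ m * e = c ^ m := by rw [hek]; exact haux (m + 1)
    have hidem : IsIdempotentElem e := by
      unfold IsIdempotentElem
      calc e * e = c ^ (k * (m + 1) - m) * (c ^ m * e) := by rw [hsplit]; ring
        _ = c ^ (k * (m + 1) - m) * c ^ m := by rw [hme]
        _ = e := hsplit.symm
    rcases hind e hidem with h0 | h1
    · exact hc0 (IsNilpotent.eq_zero ⟨k * (m + 1), h0⟩)
    · apply hcu
      apply IsUnit.of_mul_eq_one (c ^ (k * (m + 1) - 1))
      rw [← pow_succ', show k * (m + 1) - 1 + 1 = k * (m + 1) by omega, ← he, h1]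
  have hinj : ∀ m n : ℕ, c ^ m = c ^ n → m = n := by
    intro m n h
    rcases lt_trichotomy m n with h' | h' | h'
    · exact absurd h (key m n h')
    · exact h'
    · exact absurd h.symm (key n m h')
  refine ⟨hinj, Infinite.of_injective (fun n => c ^ n) fun a b hab => hinj a b hab⟩
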